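/- Let (H,α) be a monoidal Hom-Hopf algebra over a commutative ring k and let (M,μ) be a right-covariant (H,α)-Hom-bimodule with right coaction σ(m)=m_[0]⊗m_[1]. Define P_R:M→M by P_R(m)=m_[0]·S(m_[1]). Then for all h∈H and m∈M: (i) σ(P_R(m))=μ⁻¹(P_R(m))⊗1 (P_R(m) is a right coinvariant); (ii) m = P_R(m_[0])·m_[1]; (iii) P_R(m·h)=ε(h)μ(P_R(m)); (iv) P_R(h·m)=α(h₁)·(μ⁻¹(P_R(m))·S(h₂)). -/

import Mathlib

open TensorProduct

noncomputable def tmul2 {k A B C D E F : Type*} [CommRing k]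
    [AddCommGroup A] [AddCommGroup B] [AddCommGroup C] [AddCommGroup D]
    [AddCommGroup E] [AddCommGroup F]
    [Module k A] [Module k B] [Module k C] [Module k D] [Module k E] [Module k F]
    (f : A →ₗ[k] C →ₗ[k] E) (g : B →ₗ[k] D →ₗ[k] F) :
    (A ⊗[k] B) →ₗ[k] (C ⊗[k] D) →ₗ[k] (E ⊗[k] F) :=
  TensorProduct.curry
    ((TensorProduct.map (TensorProduct.lift f) (TensorProduct.lift g)) ∘ₗ
      (TensorProduct.tensorTensorTensorComm k A B C D).toLinearMap)

/-- A monoidal Hom-Hopf algebra over a commutative ring `k`. -/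
structure MonHomHopf (k H : Type*) [CommRing k] [AddCommGroup H] [Module k H] where
  α : H ≃ₗ[k] H
  mul : H →ₗ[k] H →ₗ[k] H
  one : H
  comul : H →ₗ[k] H ⊗[k] H
  counit : H →ₗ[k] k
  S : H →ₗ[k] H
  alpha_mul : ∀ g h, α (mul g h) = mul (α g) (α h)
  alpha_one : α one = one
  hom_assoc : ∀ g h l, mul (α g) (mul h l) = mul (mul g h) (α l)
  mul_one' : ∀ h, mul h one = α h
  one_mul' : ∀ h, mul one h = α h
  comul_alpha : ∀ h, comul (α h)
    = TensorProduct.map α.toLinearMap α.toLinearMap (comul h)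
  counit_alpha : ∀ h, counit (α h) = counit h
  hom_coassoc : ∀ h,
    (TensorProduct.assoc k H H H) ((TensorProduct.map comul α.symm.toLinearMap) (comul h))
      = (TensorProduct.map α.symm.toLinearMap comul) (comul h)
  counit_comul_left : ∀ h,
    (TensorProduct.lid k H) ((TensorProduct.map counit LinearMap.id) (comul h)) = α.symm h
  counit_comul_right : ∀ h,
    (TensorProduct.rid k H) ((TensorProduct.map LinearMap.id counit) (comul h)) = α.symm h
  comul_mul : ∀ g h, comul (mul g h) = tmul2 mul mul (comul g) (comul h)
  comul_one : comul one = one ⊗ₜ[k] one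
  counit_mul : ∀ g h, counit (mul g h) = counit g * counit h
  counit_one : counit one = 1
  antipode_left : ∀ h,
    (TensorProduct.lift mul) ((TensorProduct.map S LinearMap.id) (comul h)) = counit h • one
  antipode_right : ∀ h,
    (TensorProduct.lift mul) ((TensorProduct.map LinearMap.id S) (comul h)) = counit h • one
  S_alpha : ∀ h, S (α h) = α (S h)

/-- A right-covariant `(H,α)`-Hom-bimodule. -/
structure RightCovBimod {k H : Type*} [CommRing k] [AddCommGroup H] [Module k H]
    (A : MonHomHopf k H) (M : Type*) [AddCommGroup M] [Module k M] where
  μ : M ≃ₗ[k] M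
  lact : H →ₗ[k] M →ₗ[k] M
  ract : M →ₗ[k] H →ₗ[k] M
  lact_assoc : ∀ g h m, lact (A.α g) (lact h m) = lact (A.mul g h) (μ m)
  lact_one : ∀ m, lact A.one m = μ m
  mu_lact : ∀ h m, μ (lact h m) = lact (A.α h) (μ m)
  ract_assoc : ∀ m g h, ract (μ m) (A.mul g h) = ract (ract m g) (A.α h)
  ract_one : ∀ m, ract m A.one = μ m
  mu_ract : ∀ m h, μ (ract m h) = ract (μ m) (A.α h)
  bimod : ∀ h m g, ract (lact h m) (A.α g) = lact (A.α h) (ract m g)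
  sigma : M →ₗ[k] M ⊗[k] H
  sigma_coassoc : ∀ m,
    (TensorProduct.map sigma A.α.symm.toLinearMap) (sigma m)
      = (TensorProduct.assoc k M H H).symm
          ((TensorProduct.map μ.symm.toLinearMap A.comul) (sigma m))
  sigma_counit : ∀ m,
    (TensorProduct.rid k M) ((TensorProduct.map (LinearMap.id : M →ₗ[k] M) A.counit) (sigma m))
      = μ.symm m
  sigma_mu : ∀ m, sigma (μ m) = TensorProduct.map μ.toLinearMap A.α.toLinearMap (sigma m)
  sigma_cov : ∀ h g m,
    sigma (ract (lact h m) (A.α g))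
      = tmul2 lact A.mul (A.comul (A.α h)) (tmul2 ract A.mul (sigma m) (A.comul g))

/-- The projection `P_R(m) = m_[0] · S(m_[1])`. -/
noncomputable def RightCovBimod.PR {k H : Type*} [CommRing k] [AddCommGroup H] [Module k H]
    {A : MonHomHopf k H} {M : Type*} [AddCommGroup M] [Module k M]
    (B : RightCovBimod A M) : M →ₗ[k] M :=
  (TensorProduct.lift (B.ract.compl₂ A.S)) ∘ₗ B.sigma
section Basics

variable {k H : Type*} [CommRing k] [AddCommGroup H] [Module k H]

@[simp] lemma tmul2_tmul {k A B C D E F : Type*} [CommRing k]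
    [AddCommGroup A] [AddCommGroup B] [AddCommGroup C] [AddCommGroup D]
    [AddCommGroup E] [AddCommGroup F]
    [Module k A] [Module k B] [Module k C] [Module k D] [Module k E] [Module k F]
    (f : A →ₗ[k] C →ₗ[k] E) (g : B →ₗ[k] D →ₗ[k] F) (a : A) (b : B) (c : C) (d : D) :
    tmul2 f g (a ⊗ₜ[k] b) (c ⊗ₜ[k] d) = f a c ⊗ₜ[k] g b d := by
  simp [tmul2]

namespace MonHomHopf

variable (A : MonHomHopf k H)

lemma alpha_symm_one : A.α.symm A.one = A.one := by
  conv_lhs => rw [← A.alpha_one, A.α.symm_apply_apply]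

lemma alpha_symm_mul (g h : H) : A.α.symm (A.mul g h) = A.mul (A.α.symm g) (A.α.symm h) := by
  apply A.α.injective
  rw [A.α.apply_symm_apply, A.alpha_mul, A.α.apply_symm_apply, A.α.apply_symm_apply]

lemma comul_alpha_symm (h : H) :
    A.comul (A.α.symm h)
      = TensorProduct.map A.α.symm.toLinearMap A.α.symm.toLinearMap (A.comul h) := by
  apply (TensorProduct.congr A.α A.α).injective
  have : ∀ x : H ⊗[k] H, (TensorProduct.congr A.α A.α) x
      = TensorProduct.map A.α.toLinearMap A.α.toLinearMap x := fun x => rfl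
  rw [this, this, ← A.comul_alpha, A.α.apply_symm_apply, ← LinearMap.comp_apply,
    ← TensorProduct.map_comp]
  simp

lemma counit_alpha_symm (h : H) : A.counit (A.α.symm h) = A.counit h := by
  conv_rhs => rw [← A.α.apply_symm_apply h, A.counit_alpha]

lemma S_alpha_symm (h : H) : A.S (A.α.symm h) = A.α.symm (A.S h) := by
  apply A.α.injective
  rw [← A.S_alpha, A.α.apply_symm_apply, A.α.apply_symm_apply]

lemma S_one : A.S A.one = A.one := by
  have := A.antipode_left A.one
  rw [A.comul_one] at this
  simp only [TensorProduct.map_tmul, TensorProduct.lift.tmul, LinearMap.id_coe, id_eq,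
    A.counit_one, one_smul] at this
  rw [A.mul_one'] at this
  apply A.α.injective
  rw [this, A.alpha_one]

end MonHomHopf

end Basics
section Conv

open TensorProduct

variable {k C B : Type*} [CommRing k] [AddCommGroup C] [Module k C]
  [AddCommGroup B] [Module k B]

theorem conv_unique
    (δ : C →ₗ[k] C ⊗[k] C) (εC : C →ₗ[k] k) (γ : C ≃ₗ[k] C)
    (mB : B →ₗ[k] B →ₗ[k] B) (oneB : B) (β : B ≃ₗ[k] B)
    (hca : ∀ c, (TensorProduct.assoc k C C C) ((map δ γ.symm.toLinearMap) (δ c))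
        = (map γ.symm.toLinearMap δ) (δ c))
    (hcl : ∀ c, (TensorProduct.lid k C) ((map εC LinearMap.id) (δ c)) = γ.symm c)
    (hcr : ∀ c, (TensorProduct.rid k C) ((map LinearMap.id εC) (δ c)) = γ.symm c)
    (hass : ∀ x y z, mB (β x) (mB y z) = mB (mB x y) (β z))
    (hone : ∀ x, mB x oneB = β x) (hone' : ∀ x, mB oneB x = β x)
    (n p m' : C →ₗ[k] B)
    (hn : ∀ c, n (γ c) = β (n c)) (hp : ∀ c, p (γ c) = β (p c))
    (h1 : ∀ c, TensorProduct.lift mB ((map m' p) (δ c)) = εC c • oneB)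
    (h2 : ∀ c, TensorProduct.lift mB ((map n m') (δ c)) = εC c • oneB) :
    ∀ c, n c = p c := by
  intro c
  set e : C →ₗ[k] B := εC.smulRight oneB with he
  have hK1 : (TensorProduct.lift mB ∘ₗ map m' p ∘ₗ δ) = e := by
    apply LinearMap.ext; intro c; simpa [he] using h1 c
  have hK2 : (TensorProduct.lift mB ∘ₗ map n m' ∘ₗ δ) = e := by
    apply LinearMap.ext; intro c; simpa [he] using h2 c
  -- Step A : right unit law for n
  have stepA : ∀ c, TensorProduct.lift mB ((map n e) (δ c)) = n c := by
    intro c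
    have key : ∀ z : C ⊗[k] C, TensorProduct.lift mB ((map n e) z)
        = β (n ((TensorProduct.rid k C) ((map LinearMap.id εC) z))) := by
      intro z
      induction z using TensorProduct.induction_on with
      | zero => simp
      | tmul a b =>
          simp [he, map_smul]
          rw [hone]
      | add x y hx hy => simp only [map_add, hx, hy]
    rw [key, hcr]
    have := hn (γ.symm c)
    rw [γ.apply_symm_apply] at this
    rw [← this]
  -- Step B : left unit law for p
  have stepB : ∀ c, TensorProduct.lift mB ((map e p) (δ c)) = p c := by
    intro c
    have key : ∀ z : C ⊗[k] C, TensorProduct.lift mB ((map e p) z)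
        = β (p ((TensorProduct.lid k C) ((map εC LinearMap.id) z))) := by
      intro z
      induction z using TensorProduct.induction_on with
      | zero => simp
      | tmul a b =>
          simp [he, map_smul]
          rw [hone']
      | add x y hx hy => simp only [map_add, hx, hy]
    rw [key, hcl]
    have := hp (γ.symm c)
    rw [γ.apply_symm_apply] at this
    rw [← this]
  -- T : C ⊗ (C ⊗ C) → B
  set g2 : C ⊗[k] C →ₗ[k] B := TensorProduct.lift ((mB ∘ₗ m').compl₂ p) with hg2
  set T : C ⊗[k] (C ⊗[k] C) →ₗ[k] B
    := TensorProduct.lift ((mB ∘ₗ n ∘ₗ γ.toLinearMap).compl₂ g2) with hT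
  have Ttmul : ∀ (a : C) (w : C ⊗[k] C), T (a ⊗ₜ w) = mB (n (γ a)) (g2 w) := by
    intro a w; simp [hT]
  have g2tmul : ∀ (b c' : C), g2 (b ⊗ₜ c') = mB (m' b) (p c') := by
    intro b c'; simp [hg2]
  -- Step D : associativity step
  have stepD : TensorProduct.lift mB
      ((map n (TensorProduct.lift mB ∘ₗ map m' p ∘ₗ δ)) (δ c))
      = TensorProduct.lift mB
        ((map (TensorProduct.lift mB ∘ₗ map n m' ∘ₗ δ) p) (δ c)) := by
    have sub1 : ∀ z : C ⊗[k] C,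
        TensorProduct.lift mB ((map n (TensorProduct.lift mB ∘ₗ map m' p ∘ₗ δ)) z)
          = T ((map γ.symm.toLinearMap δ) z) := by
      intro z
      induction z using TensorProduct.induction_on with
      | zero => simp
      | tmul a b =>
          simp only [map_tmul, lift.tmul, LinearMap.comp_apply, LinearEquiv.coe_coe]
          have inner : ∀ w : C ⊗[k] C,
              mB (n a) (TensorProduct.lift mB ((map m' p) w)) = T (γ.symm a ⊗ₜ w) := by
            intro w
            induction w using TensorProduct.induction_on with
            | zero => simp
            | tmul b' c' => rw [Ttmul, γ.apply_symm_apply, g2tmul]; simp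
            | add x y hx hy => simp only [map_add, tmul_add, hx, hy]
          exact inner (δ b)
      | add x y hx hy => simp only [map_add, hx, hy]
    have sub2 : ∀ z : C ⊗[k] C,
        T ((TensorProduct.assoc k C C C) ((map δ γ.symm.toLinearMap) z))
          = TensorProduct.lift mB ((map (TensorProduct.lift mB ∘ₗ map n m' ∘ₗ δ) p) z) := by
      intro z
      induction z using TensorProduct.induction_on with
      | zero => simp
      | tmul u v =>
          simp only [map_tmul, lift.tmul, LinearMap.comp_apply, LinearEquiv.coe_coe]
          have inner : ∀ w : C ⊗[k] C,
              T ((TensorProduct.assoc k C C C) (w ⊗ₜ γ.symm v))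
                = mB (TensorProduct.lift mB ((map n m') w)) (p v) := by
            intro w
            induction w using TensorProduct.induction_on with
            | zero => simp
            | tmul a b =>
                rw [assoc_tmul, Ttmul, g2tmul, hn, hass, ← hp, γ.apply_symm_apply]
                simp
            | add x y hx hy =>
                simp only [add_tmul, map_add, LinearMap.add_apply, hx, hy]
          exact inner (δ u)
      | add x y hx hy => simp only [map_add, hx, hy]
    rw [sub1, ← hca, sub2]
  calc n c = TensorProduct.lift mB ((map n e) (δ c)) := (stepA c).symm
    _ = TensorProduct.lift mB ((map n (TensorProduct.lift mB ∘ₗ map m' p ∘ₗ δ)) (δ c)) := by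
        rw [hK1]
    _ = TensorProduct.lift mB ((map (TensorProduct.lift mB ∘ₗ map n m' ∘ₗ δ) p) (δ c)) := stepD
    _ = TensorProduct.lift mB ((map e p) (δ c)) := by rw [hK2]
    _ = p c := stepB c
end Conv
section Antimul

open TensorProduct

variable {k H : Type*} [CommRing k] [AddCommGroup H] [Module k H]

namespace MonHomHopf

variable (A : MonHomHopf k H)

set_option maxHeartbeats 1000000 in
set_option maxRecDepth 10000 in
theorem S_antimul (g h : H) : A.S (A.mul g h) = A.mul (A.S h) (A.S g) := by
  classical
  set ttc := (tensorTensorTensorComm k H H H H).toLinearMap with httc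
  set δC : H ⊗[k] H →ₗ[k] (H ⊗[k] H) ⊗[k] (H ⊗[k] H) := ttc ∘ₗ map A.comul A.comul with hδC
  set εC : H ⊗[k] H →ₗ[k] k :=
    (TensorProduct.lid k k).toLinearMap ∘ₗ map A.counit A.counit with hεC
  set γC : H ⊗[k] H ≃ₗ[k] H ⊗[k] H := TensorProduct.congr A.α A.α with hγC
  have γCsymm : γC.symm = TensorProduct.congr A.α.symm A.α.symm := rfl
  set n : H ⊗[k] H →ₗ[k] H := TensorProduct.lift ((A.mul.flip.compl₂ A.S) ∘ₗ A.S) with hn'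
  set m' : H ⊗[k] H →ₗ[k] H := TensorProduct.lift A.mul with hm'
  set p : H ⊗[k] H →ₗ[k] H := A.S ∘ₗ m' with hp'
  have ntmul : ∀ a b : H, n (a ⊗ₜ b) = A.mul (A.S b) (A.S a) := by intro a b; simp [hn']
  have m'tmul : ∀ a b : H, m' (a ⊗ₜ b) = A.mul a b := by intro a b; simp [hm']
  have ptmul : ∀ a b : H, p (a ⊗ₜ b) = A.S (A.mul a b) := by
    intro a b; rw [hp', LinearMap.comp_apply, m'tmul]
  have δCtmul : ∀ a b : H, δC (a ⊗ₜ b) = ttc (A.comul a ⊗ₜ A.comul b) := by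
    intro a b; simp [hδC]
  have εCtmul : ∀ a b : H, εC (a ⊗ₜ b) = A.counit a * A.counit b := by
    intro a b; simp [hεC, smul_eq_mul]
  -- coalgebra axioms for C = H ⊗ H
  have hca : ∀ c, (TensorProduct.assoc k (H ⊗[k] H) (H ⊗[k] H) (H ⊗[k] H))
      ((map δC γC.symm.toLinearMap) (δC c)) = (map γC.symm.toLinearMap δC) (δC c) := by
    set Ψ : ((H ⊗[k] H) ⊗[k] H) ⊗[k] ((H ⊗[k] H) ⊗[k] H) →ₗ[k]
        (H ⊗[k] H) ⊗[k] ((H ⊗[k] H) ⊗[k] (H ⊗[k] H)) :=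
      (TensorProduct.assoc k (H ⊗[k] H) (H ⊗[k] H) (H ⊗[k] H)).toLinearMap ∘ₗ
        (map ttc LinearMap.id) ∘ₗ
        (tensorTensorTensorComm k (H ⊗[k] H) H (H ⊗[k] H) H).toLinearMap with hΨ
    set Ψ' : (H ⊗[k] (H ⊗[k] H)) ⊗[k] (H ⊗[k] (H ⊗[k] H)) →ₗ[k]
        (H ⊗[k] H) ⊗[k] ((H ⊗[k] H) ⊗[k] (H ⊗[k] H)) :=
      (map LinearMap.id ttc) ∘ₗ
        (tensorTensorTensorComm k H (H ⊗[k] H) H (H ⊗[k] H)).toLinearMap with hΨ'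
    -- lem3 : bridge between Ψ and Ψ'
    have lem3 : ∀ z w : (H ⊗[k] H) ⊗[k] H, Ψ (z ⊗ₜ w)
        = Ψ' ((TensorProduct.assoc k H H H z) ⊗ₜ (TensorProduct.assoc k H H H w)) := by
      intro z w
      induction z using TensorProduct.induction_on with
      | zero => simp
      | tmul zz c =>
          induction w using TensorProduct.induction_on with
          | zero => simp
          | tmul ww c' =>
              induction zz using TensorProduct.induction_on with
              | zero => simp
              | tmul a b =>
                  induction ww using TensorProduct.induction_on with
                  | zero => simp
                  | tmul a' b' => simp [hΨ, hΨ', httc]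
                  | add x y hx hy => simp only [add_tmul, tmul_add, map_add, hx, hy]
              | add x y hx hy => simp only [add_tmul, tmul_add, map_add, hx, hy]
          | add x y hx hy => simp only [add_tmul, tmul_add, map_add, hx, hy]
      | add x y hx hy => simp only [add_tmul, tmul_add, map_add, hx, hy]
    have lem1 : ∀ x y : H ⊗[k] H,
        (TensorProduct.assoc k (H ⊗[k] H) (H ⊗[k] H) (H ⊗[k] H))
            ((map δC γC.symm.toLinearMap) (ttc (x ⊗ₜ y)))
          = Ψ (((map A.comul A.α.symm.toLinearMap) x) ⊗ₜ ((map A.comul A.α.symm.toLinearMap) y)) := by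
      intro x y
      induction x using TensorProduct.induction_on with
      | zero => simp
      | tmul u v =>
          induction y using TensorProduct.induction_on with
          | zero => simp
          | tmul u' v' =>
              have lem0 : ∀ z w : H ⊗[k] H,
                  (TensorProduct.assoc k (H ⊗[k] H) (H ⊗[k] H) (H ⊗[k] H))
                      ((ttc (z ⊗ₜ w)) ⊗ₜ (A.α.symm v ⊗ₜ A.α.symm v'))
                    = Ψ ((z ⊗ₜ A.α.symm v) ⊗ₜ (w ⊗ₜ A.α.symm v')) := by
                intro z w
                induction z using TensorProduct.induction_on with
                | zero => simp
                | tmul a b =>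
                    induction w using TensorProduct.induction_on with
                    | zero => simp
                    | tmul a' b' => simp [hΨ, httc]
                    | add x y hx hy => simp only [add_tmul, tmul_add, map_add, hx, hy]
                | add x y hx hy => simp only [add_tmul, tmul_add, map_add, hx, hy]
              simp only [httc, tensorTensorTensorComm_tmul, map_tmul, δCtmul, γCsymm,
                congr_tmul, LinearEquiv.coe_coe]
              exact lem0 (A.comul u) (A.comul u')
          | add x y hx hy => simp only [map_add, tmul_add, hx, hy]
      | add x y hx hy => simp only [map_add, add_tmul, hx, hy]
    have lem2 : ∀ x y : H ⊗[k] H,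
        (map γC.symm.toLinearMap δC) (ttc (x ⊗ₜ y))
          = Ψ' (((map A.α.symm.toLinearMap A.comul) x) ⊗ₜ ((map A.α.symm.toLinearMap A.comul) y)) := by
      intro x y
      induction x using TensorProduct.induction_on with
      | zero => simp
      | tmul u v =>
          induction y using TensorProduct.induction_on with
          | zero => simp
          | tmul u' v' =>
              have lem0 : ∀ z w : H ⊗[k] H,
                  (A.α.symm u ⊗ₜ[k] A.α.symm u') ⊗ₜ[k] (ttc (z ⊗ₜ w))
                    = Ψ' ((A.α.symm u ⊗ₜ z) ⊗ₜ (A.α.symm u' ⊗ₜ w)) := by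
                intro z w
                induction z using TensorProduct.induction_on with
                | zero => simp
                | tmul a b =>
                    induction w using TensorProduct.induction_on with
                    | zero => simp
                    | tmul a' b' => simp [hΨ', httc]
                    | add x y hx hy => simp only [add_tmul, tmul_add, map_add, hx, hy]
                | add x y hx hy => simp only [add_tmul, tmul_add, map_add, hx, hy]
              simp only [httc, tensorTensorTensorComm_tmul, map_tmul, δCtmul, γCsymm,
                congr_tmul, LinearEquiv.coe_coe]
              exact lem0 (A.comul v) (A.comul v')
          | add x y hx hy => simp only [map_add, tmul_add, hx, hy]
      | add x y hx hy => simp only [map_add, add_tmul, hx, hy]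
    intro c
    induction c using TensorProduct.induction_on with
    | zero => simp
    | tmul g h =>
        rw [δCtmul, lem1, lem2, lem3]
        rw [A.hom_coassoc, A.hom_coassoc]
    | add x y hx hy => simp only [map_add, hx, hy]
  have hcl : ∀ c, (TensorProduct.lid k (H ⊗[k] H)) ((map εC LinearMap.id) (δC c))
      = γC.symm c := by
    have key : ∀ x y : H ⊗[k] H,
        (TensorProduct.lid k (H ⊗[k] H)) ((map εC LinearMap.id) (ttc (x ⊗ₜ y)))
          = ((TensorProduct.lid k H) ((map A.counit LinearMap.id) x)) ⊗ₜ
            ((TensorProduct.lid k H) ((map A.counit LinearMap.id) y)) := by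
      intro x y
      induction x using TensorProduct.induction_on with
      | zero => simp
      | tmul u v =>
          induction y using TensorProduct.induction_on with
          | zero => simp
          | tmul u' v' =>
              simp only [httc, tensorTensorTensorComm_tmul, map_tmul, LinearMap.id_coe,
                id_eq, εCtmul, lid_tmul, smul_tmul', tmul_smul, mul_smul,
                LinearEquiv.coe_coe]
              try rw [smul_comm]
          | add x y hx hy => simp only [map_add, tmul_add, smul_add, hx, hy]
      | add x y hx hy => simp only [map_add, add_tmul, smul_add, hx, hy]
    intro c
    induction c using TensorProduct.induction_on with
    | zero => simp
    | tmul g h => rw [δCtmul, key, A.counit_comul_left, A.counit_comul_left]; rfl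
    | add x y hx hy => simp only [map_add, hx, hy]
  have hcr : ∀ c, (TensorProduct.rid k (H ⊗[k] H)) ((map LinearMap.id εC) (δC c))
      = γC.symm c := by
    have key : ∀ x y : H ⊗[k] H,
        (TensorProduct.rid k (H ⊗[k] H)) ((map LinearMap.id εC) (ttc (x ⊗ₜ y)))
          = ((TensorProduct.rid k H) ((map LinearMap.id A.counit) x)) ⊗ₜ
            ((TensorProduct.rid k H) ((map LinearMap.id A.counit) y)) := by
      intro x y
      induction x using TensorProduct.induction_on with
      | zero => simp
      | tmul u v =>
          induction y using TensorProduct.induction_on with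
          | zero => simp
          | tmul u' v' =>
              simp only [httc, tensorTensorTensorComm_tmul, map_tmul, LinearMap.id_coe,
                id_eq, εCtmul, rid_tmul, smul_tmul', tmul_smul, mul_smul,
                LinearEquiv.coe_coe]
              try rw [smul_comm]
          | add x y hx hy => simp only [map_add, tmul_add, smul_add, hx, hy]
      | add x y hx hy => simp only [map_add, add_tmul, smul_add, hx, hy]
    intro c
    induction c using TensorProduct.induction_on with
    | zero => simp
    | tmul g h => rw [δCtmul, key, A.counit_comul_right, A.counit_comul_right]; rfl
    | add x y hx hy => simp only [map_add, hx, hy]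
  -- α-compatibility of n and p
  have hnγ : ∀ c, n (γC c) = A.α (n c) := by
    intro c
    induction c using TensorProduct.induction_on with
    | zero => simp
    | tmul a b =>
        rw [hγC]
        simp only [congr_tmul, ntmul]
        rw [A.S_alpha, A.S_alpha, ← A.alpha_mul]
    | add x y hx hy => simp only [map_add, hx, hy]
  have hpγ : ∀ c, p (γC c) = A.α (p c) := by
    intro c
    induction c using TensorProduct.induction_on with
    | zero => simp
    | tmul a b =>
        rw [hγC]
        simp only [congr_tmul, ptmul]
        rw [← A.alpha_mul, A.S_alpha]
    | add x y hx hy => simp only [map_add, hx, hy]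
  -- h1
  have h1 : ∀ c, TensorProduct.lift A.mul ((map m' p) (δC c)) = εC c • A.one := by
    have key : ∀ x y : H ⊗[k] H,
        TensorProduct.lift A.mul ((map m' p) (ttc (x ⊗ₜ y)))
          = TensorProduct.lift A.mul ((map LinearMap.id A.S) (tmul2 A.mul A.mul x y)) := by
      intro x y
      induction x using TensorProduct.induction_on with
      | zero => simp
      | tmul u v =>
          induction y using TensorProduct.induction_on with
          | zero => simp
          | tmul u' v' => simp [httc, m'tmul, ptmul]
          | add x y hx hy => simp only [map_add, tmul_add, LinearMap.add_apply, hx, hy]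
      | add x y hx hy => simp only [map_add, add_tmul, LinearMap.add_apply, hx, hy]
    intro c
    induction c using TensorProduct.induction_on with
    | zero => simp
    | tmul g h =>
        rw [δCtmul, key, ← A.comul_mul, A.antipode_right, εCtmul, A.counit_mul]
    | add x y hx hy => simp only [map_add, add_smul, hx, hy]
  -- h2
  have h2 : ∀ c, TensorProduct.lift A.mul ((map n m') (δC c)) = εC c • A.one := by
    have aux1 : ∀ (x : H ⊗[k] H) (c d : H),
        TensorProduct.lift A.mul ((map n m') (ttc (x ⊗ₜ (c ⊗ₜ d))))
          = A.mul (A.α (A.S c))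
              (A.mul (A.α.symm (TensorProduct.lift A.mul ((map A.S LinearMap.id) x))) d) := by
      intro x c d
      induction x using TensorProduct.induction_on with
      | zero => simp
      | tmul a b =>
          simp only [httc, tensorTensorTensorComm_tmul, map_tmul, lift.tmul,
            LinearMap.id_coe, id_eq, LinearEquiv.coe_coe, ntmul, m'tmul]
          -- goal: mul (mul (S c) (S a)) (mul b d) = mul (α (S c)) (mul (α⁻¹ (mul (S a) b)) d)
          have e1 : A.mul b d = A.α (A.mul (A.α.symm b) (A.α.symm d)) := by
            rw [A.alpha_mul, A.α.apply_symm_apply, A.α.apply_symm_apply]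
          rw [e1, ← A.hom_assoc]
          congr 1
          have e2 : A.S a = A.α (A.α.symm (A.S a)) := (A.α.apply_symm_apply _).symm
          rw [e2, A.hom_assoc, A.α.apply_symm_apply]
          congr 1
          rw [← A.alpha_symm_mul, A.α.apply_symm_apply]
      | add x y hx hy =>
          simp only [map_add, add_tmul, LinearMap.add_apply, hx, hy, LinearMap.map_add]
    have aux2 : ∀ (y : H ⊗[k] H) (g : H),
        TensorProduct.lift A.mul ((map n m') (ttc ((A.comul g) ⊗ₜ y)))
          = A.counit g • A.α (TensorProduct.lift A.mul ((map A.S LinearMap.id) y)) := by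
      intro y g
      induction y using TensorProduct.induction_on with
      | zero => simp
      | tmul c d =>
          rw [aux1, A.antipode_left]
          simp only [map_smul, LinearMap.smul_apply, A.alpha_symm_one, A.one_mul',
            map_tmul, lift.tmul, LinearMap.id_coe, id_eq]
          rw [A.alpha_mul]
      | add x y hx hy =>
          simp only [tmul_add, map_add, hx, hy, smul_add]
    intro c
    induction c using TensorProduct.induction_on with
    | zero => simp
    | tmul g h =>
        rw [δCtmul, aux2, A.antipode_left, εCtmul]
        rw [map_smul, A.alpha_one, smul_smul]
    | add x y hx hy => simp only [map_add, add_smul, hx, hy]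
  have main := conv_unique δC εC γC A.mul A.one A.α hca hcl hcr A.hom_assoc A.mul_one'
    A.one_mul' n p m' hnγ hpγ h1 h2 (g ⊗ₜ h)
  rw [ntmul, ptmul] at main
  exact main.symm

end MonHomHopf

end Antimul
section Anticomul

open TensorProduct

variable {k H : Type*} [CommRing k] [AddCommGroup H] [Module k H]

namespace MonHomHopf

variable (A : MonHomHopf k H)

set_option maxHeartbeats 1000000 in
set_option maxRecDepth 10000 in
theorem S_anticomul (h : H) :
    A.comul (A.S h) = (TensorProduct.comm k H H) ((map A.S A.S) (A.comul h)) := by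
  classical
  set ttc := (tensorTensorTensorComm k H H H H).toLinearMap with httc
  set mB : (H ⊗[k] H) →ₗ[k] (H ⊗[k] H) →ₗ[k] (H ⊗[k] H) := tmul2 A.mul A.mul with hmB
  set oneB : H ⊗[k] H := A.one ⊗ₜ A.one with honeB
  set β : H ⊗[k] H ≃ₗ[k] H ⊗[k] H := TensorProduct.congr A.α A.α with hβ
  set n : H →ₗ[k] H ⊗[k] H :=
    (TensorProduct.comm k H H).toLinearMap ∘ₗ (map A.S A.S) ∘ₗ A.comul with hn'
  set p : H →ₗ[k] H ⊗[k] H := A.comul ∘ₗ A.S with hp'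
  have napp : ∀ a : H, n a = (TensorProduct.comm k H H) ((map A.S A.S) (A.comul a)) := by
    intro a; simp [hn']
  have papp : ∀ a : H, p a = A.comul (A.S a) := by intro a; simp [hp']
  -- algebra axioms for B = H ⊗ H
  have hass : ∀ x y z : H ⊗[k] H, mB (β x) (mB y z) = mB (mB x y) (β z) := by
    intro x y z
    induction x using TensorProduct.induction_on with
    | zero => simp
    | tmul a b =>
        induction y using TensorProduct.induction_on with
        | zero => simp
        | tmul c d =>
            induction z using TensorProduct.induction_on with
            | zero => simp
            | tmul e f =>
                simp only [hβ, congr_tmul, hmB, tmul2_tmul]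
                rw [A.hom_assoc, A.hom_assoc]
            | add x' y' hx hy => simp only [map_add, hx, hy]
        | add x' y' hx hy =>
            simp only [map_add, LinearMap.add_apply, hx, hy]
    | add x' y' hx hy =>
        simp only [map_add, LinearMap.add_apply, hx, hy]
  have hone : ∀ x : H ⊗[k] H, mB x oneB = β x := by
    intro x
    induction x using TensorProduct.induction_on with
    | zero => simp
    | tmul a b =>
        simp only [honeB, hβ, congr_tmul, hmB, tmul2_tmul, A.mul_one']
    | add x' y' hx hy => simp only [map_add, LinearMap.add_apply, hx, hy]
  have hone' : ∀ x : H ⊗[k] H, mB oneB x = β x := by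
    intro x
    induction x using TensorProduct.induction_on with
    | zero => simp
    | tmul a b =>
        simp only [honeB, hβ, congr_tmul, hmB, tmul2_tmul, A.one_mul']
    | add x' y' hx hy => simp only [map_add, hx, hy]
  -- α-compatibility
  have hnγ : ∀ a : H, n (A.α a) = β (n a) := by
    intro a
    rw [napp, napp, A.comul_alpha, hβ]
    have key : ∀ z : H ⊗[k] H,
        (TensorProduct.comm k H H) ((map A.S A.S) ((map A.α.toLinearMap A.α.toLinearMap) z))
          = (TensorProduct.congr A.α A.α) ((TensorProduct.comm k H H) ((map A.S A.S) z)) := by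
      intro z
      induction z using TensorProduct.induction_on with
      | zero => simp
      | tmul a b => simp only [map_tmul, comm_tmul, congr_tmul, LinearEquiv.coe_coe,
          A.S_alpha]
      | add x' y' hx hy => simp only [map_add, hx, hy]
    exact key (A.comul a)
  have hpγ : ∀ a : H, p (A.α a) = β (p a) := by
    intro a
    rw [papp, papp, A.S_alpha, A.comul_alpha, hβ]
    rfl
  -- h1
  have h1 : ∀ c : H, TensorProduct.lift mB ((map A.comul p) (A.comul c))
      = A.counit c • oneB := by
    have key : ∀ z : H ⊗[k] H, TensorProduct.lift mB ((map A.comul p) z)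
        = A.comul (TensorProduct.lift A.mul ((map LinearMap.id A.S) z)) := by
      intro z
      induction z using TensorProduct.induction_on with
      | zero => simp
      | tmul a b =>
          simp only [map_tmul, lift.tmul, LinearMap.id_coe, id_eq, papp, hmB]
          rw [← A.comul_mul]
      | add x' y' hx hy => simp only [map_add, hx, hy]
    intro c
    rw [key, A.antipode_right, map_smul, A.comul_one, honeB]
  -- h2
  have h2 : ∀ c : H, TensorProduct.lift mB ((map n A.comul) (A.comul c))
      = A.counit c • oneB := by
    set mS : H ⊗[k] H →ₗ[k] H := TensorProduct.lift (A.mul ∘ₗ A.S) with hmS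
    have mStmul : ∀ a b : H, mS (a ⊗ₜ b) = A.mul (A.S a) b := by intro a b; simp [hmS]
    set Γ : (H ⊗[k] H) ⊗[k] (H ⊗[k] H) →ₗ[k] H ⊗[k] H :=
      (map mS mS) ∘ₗ ttc ∘ₗ (map (TensorProduct.comm k H H).toLinearMap LinearMap.id)
      with hΓ
    have Γtmul : ∀ a b c d : H, Γ ((a ⊗ₜ b) ⊗ₜ (c ⊗ₜ d))
        = (A.mul (A.S b) c) ⊗ₜ (A.mul (A.S a) d) := by
      intro a b c d
      simp [hΓ, httc, mStmul]
    intro c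
    -- c1 : rewrite via Γ
    have c1 : ∀ z : H ⊗[k] H, TensorProduct.lift mB ((map n A.comul) z)
        = Γ ((map A.comul A.comul) z) := by
      intro z
      induction z using TensorProduct.induction_on with
      | zero => simp
      | tmul u w =>
          simp only [map_tmul, lift.tmul, napp]
          have inner : ∀ x y : H ⊗[k] H,
              mB ((TensorProduct.comm k H H) ((map A.S A.S) x)) y = Γ (x ⊗ₜ y) := by
            intro x y
            induction x using TensorProduct.induction_on with
            | zero => simp
            | tmul a b =>
                induction y using TensorProduct.induction_on with
                | zero => simp
                | tmul c' d' => simp only [map_tmul, comm_tmul, hmB, tmul2_tmul, Γtmul]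
                | add x' y' hx hy => simp only [map_add, tmul_add, hx, hy]
            | add x' y' hx hy => simp only [map_add, add_tmul, LinearMap.add_apply, hx, hy]
          exact inner (A.comul u) (A.comul w)
      | add x' y' hx hy => simp only [map_add, hx, hy]
    -- c2 : first use of Hom-coassociativity
    have c2 : (map A.comul A.comul) (A.comul c)
        = (map LinearMap.id (A.comul ∘ₗ A.α.toLinearMap))
            ((TensorProduct.assoc k H H H).symm
              ((map A.α.symm.toLinearMap A.comul) (A.comul c))) := by
      rw [← A.hom_coassoc c, LinearEquiv.symm_apply_apply]
      have key : ∀ z : H ⊗[k] H,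
          (map LinearMap.id (A.comul ∘ₗ A.α.toLinearMap)) ((map A.comul A.α.symm.toLinearMap) z)
            = (map A.comul A.comul) z := by
        intro z
        induction z using TensorProduct.induction_on with
        | zero => simp
        | tmul a b =>
            simp only [map_tmul, LinearMap.comp_apply, LinearMap.id_coe, id_eq,
              LinearEquiv.coe_coe, A.α.apply_symm_apply]
        | add x' y' hx hy => simp only [map_add, hx, hy]
      rw [key]
    rw [c1, c2]
    -- now compute on elements
    have mSeq : ∀ z : H ⊗[k] H, mS z = TensorProduct.lift A.mul ((map A.S LinearMap.id) z) := by
      intro z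
      induction z using TensorProduct.induction_on with
      | zero => simp
      | tmul a b => simp [mStmul]
      | add x' y' hx hy => simp only [map_add, hx, hy]
    have c4 : ∀ z : H ⊗[k] H,
        Γ ((map LinearMap.id (A.comul ∘ₗ A.α.toLinearMap))
            ((TensorProduct.assoc k H H H).symm ((map A.α.symm.toLinearMap A.comul) z)))
          = A.one ⊗ₜ (A.α.symm (TensorProduct.lift A.mul ((map A.S LinearMap.id) z))) := by
      intro z
      induction z using TensorProduct.induction_on with
      | zero => simp
      | tmul u w =>
          simp only [map_tmul, LinearEquiv.coe_coe]
          -- abbreviation for the middle map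
          have pc1 : ∀ q : H ⊗[k] H,
              Γ ((map LinearMap.id (A.comul ∘ₗ A.α.toLinearMap))
                  ((TensorProduct.assoc k H H H).symm (A.α.symm u ⊗ₜ q)))
                = (map mS (A.mul (A.S (A.α.symm u))))
                    ((TensorProduct.assoc k H H H).symm
                      ((map LinearMap.id (A.comul ∘ₗ A.α.toLinearMap)) q)) := by
            intro q
            induction q using TensorProduct.induction_on with
            | zero => simp
            | tmul b c' =>
                simp only [assoc_symm_tmul, map_tmul, LinearMap.comp_apply,
                  LinearMap.id_coe, id_eq, LinearEquiv.coe_coe]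
                have inner : ∀ r : H ⊗[k] H,
                    Γ ((A.α.symm u ⊗ₜ b) ⊗ₜ r)
                      = (map mS (A.mul (A.S (A.α.symm u))))
                          ((TensorProduct.assoc k H H H).symm (b ⊗ₜ r)) := by
                  intro r
                  induction r using TensorProduct.induction_on with
                  | zero => simp
                  | tmul x y =>
                      simp only [Γtmul, assoc_symm_tmul, map_tmul, mStmul]
                  | add x' y' hx hy => simp only [map_add, tmul_add, hx, hy]
                exact inner (A.comul (A.α c'))
            | add x' y' hx hy => simp only [map_add, tmul_add, hx, hy]
          rw [pc1]
          -- second use of Hom-coassociativity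
          have jw : (map LinearMap.id (A.comul ∘ₗ A.α.toLinearMap)) (A.comul w)
              = (TensorProduct.assoc k H H H)
                  ((map (A.comul ∘ₗ A.α.toLinearMap) LinearMap.id) (A.comul w)) := by
            have base := A.hom_coassoc (A.α w)
            rw [A.comul_alpha] at base
            have l1 : ∀ z : H ⊗[k] H,
                (map A.comul A.α.symm.toLinearMap) ((map A.α.toLinearMap A.α.toLinearMap) z)
                  = (map (A.comul ∘ₗ A.α.toLinearMap) LinearMap.id) z := by
              intro z
              induction z using TensorProduct.induction_on with
              | zero => simp
              | tmul a b => simp [A.α.symm_apply_apply]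
              | add x' y' hx hy => simp only [map_add, hx, hy]
            have l2 : ∀ z : H ⊗[k] H,
                (map A.α.symm.toLinearMap A.comul) ((map A.α.toLinearMap A.α.toLinearMap) z)
                  = (map LinearMap.id (A.comul ∘ₗ A.α.toLinearMap)) z := by
              intro z
              induction z using TensorProduct.induction_on with
              | zero => simp
              | tmul a b => simp [A.α.symm_apply_apply]
              | add x' y' hx hy => simp only [map_add, hx, hy]
            rw [l1, l2] at base
            exact base.symm
          rw [jw]
          have pc3 : ∀ z' : H ⊗[k] H,
              (map mS (A.mul (A.S (A.α.symm u))))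
                  ((TensorProduct.assoc k H H H).symm
                    ((TensorProduct.assoc k H H H)
                      ((map (A.comul ∘ₗ A.α.toLinearMap) LinearMap.id) z')))
                = A.one ⊗ₜ (A.mul (A.S (A.α.symm u))
                    ((TensorProduct.lid k H) ((map A.counit LinearMap.id) z'))) := by
            intro z'
            induction z' using TensorProduct.induction_on with
            | zero => simp
            | tmul w1 w2 =>
                simp only [map_tmul, LinearMap.comp_apply, LinearMap.id_coe, id_eq,
                  LinearEquiv.coe_coe, LinearEquiv.symm_apply_apply, lid_tmul]
                rw [mSeq, A.antipode_left, A.counit_alpha]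
                simp only [map_smul, tmul_smul, smul_tmul']
            | add x' y' hx hy =>
                simp only [map_add, tmul_add, hx, hy, LinearMap.map_add]
          rw [pc3, A.counit_comul_left]
          simp only [lift.tmul, LinearMap.id_coe, id_eq]
          rw [A.alpha_symm_mul, A.S_alpha_symm]
      | add x' y' hx hy =>
          simp only [map_add, tmul_add, hx, hy, LinearMap.map_add]
    rw [c4, A.antipode_left, map_smul, A.alpha_symm_one, tmul_smul, honeB]
  have main := conv_unique A.comul A.counit A.α mB oneB β A.hom_coassoc
    A.counit_comul_left A.counit_comul_right hass hone hone' n p A.comul hnγ hpγ h1 h2 h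
  rw [napp, papp] at main
  exact main.symm

end MonHomHopf

end Anticomul
section Bimod

open TensorProduct

variable {k H : Type*} [CommRing k] [AddCommGroup H] [Module k H]
variable {A : MonHomHopf k H} {M : Type*} [AddCommGroup M] [Module k M]

namespace RightCovBimod

variable (B : RightCovBimod A M)

lemma mu_symm_ract (m : M) (h : H) :
    B.μ.symm (B.ract m h) = B.ract (B.μ.symm m) (A.α.symm h) := by
  apply B.μ.injective
  rw [B.μ.apply_symm_apply, B.mu_ract, B.μ.apply_symm_apply, A.α.apply_symm_apply]

lemma sigma_mu_symm (m : M) :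
    B.sigma (B.μ.symm m)
      = (map B.μ.symm.toLinearMap A.α.symm.toLinearMap) (B.sigma m) := by
  apply (TensorProduct.congr B.μ A.α).injective
  have e1 : ∀ z : M ⊗[k] H, (TensorProduct.congr B.μ A.α) z
      = (map B.μ.toLinearMap A.α.toLinearMap) z := fun _ => rfl
  rw [e1, e1, ← B.sigma_mu, B.μ.apply_symm_apply, ← LinearMap.comp_apply, ← map_comp]
  have e2 : ∀ z : M ⊗[k] H,
      (map (B.μ.toLinearMap ∘ₗ B.μ.symm.toLinearMap)
        (A.α.toLinearMap ∘ₗ A.α.symm.toLinearMap)) z = z := by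
    intro z
    induction z using TensorProduct.induction_on with
    | zero => simp
    | tmul a b => simp
    | add x y hx hy => simp only [map_add, hx, hy]
  rw [e2]

lemma sigma_ract (m : M) (h : H) :
    B.sigma (B.ract m h) = tmul2 B.ract A.mul (B.sigma m) (A.comul h) := by
  have base := B.sigma_cov A.one (A.α.symm h) (B.μ.symm m)
  rw [B.lact_one, B.μ.apply_symm_apply, A.α.apply_symm_apply] at base
  rw [A.alpha_one, A.comul_one, B.sigma_mu_symm, A.comul_alpha_symm] at base
  rw [base]
  have key : ∀ (x : M ⊗[k] H) (y : H ⊗[k] H),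
      tmul2 B.lact A.mul (A.one ⊗ₜ A.one)
        (tmul2 B.ract A.mul ((map B.μ.symm.toLinearMap A.α.symm.toLinearMap) x)
          ((map A.α.symm.toLinearMap A.α.symm.toLinearMap) y))
      = tmul2 B.ract A.mul x y := by
    intro x y
    induction x using TensorProduct.induction_on with
    | zero => simp
    | tmul u v =>
        induction y using TensorProduct.induction_on with
        | zero => simp
        | tmul a b =>
            simp only [map_tmul, tmul2_tmul, LinearEquiv.coe_coe]
            rw [B.lact_one, A.one_mul', B.mu_ract, A.alpha_mul]
            simp only [LinearEquiv.apply_symm_apply]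
        | add x' y' hx hy => simp only [map_add, hx, hy]
    | add x' y' hx hy => simp only [map_add, LinearMap.add_apply, hx, hy]
  exact key (B.sigma m) (A.comul h)

lemma sigma_lact (h : H) (m : M) :
    B.sigma (B.lact h m) = tmul2 B.lact A.mul (A.comul h) (B.sigma m) := by
  apply (TensorProduct.congr B.μ A.α).injective
  have e1 : ∀ z : M ⊗[k] H, (TensorProduct.congr B.μ A.α) z
      = (map B.μ.toLinearMap A.α.toLinearMap) z := fun _ => rfl
  rw [e1, e1, ← B.sigma_mu]
  have base := B.sigma_cov h A.one m
  rw [A.alpha_one, B.ract_one, A.comul_one, A.comul_alpha] at base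
  rw [base]
  have key : ∀ (y : H ⊗[k] H) (x : M ⊗[k] H),
      tmul2 B.lact A.mul ((map A.α.toLinearMap A.α.toLinearMap) y)
        (tmul2 B.ract A.mul x (A.one ⊗ₜ A.one))
      = (map B.μ.toLinearMap A.α.toLinearMap) (tmul2 B.lact A.mul y x) := by
    intro y x
    induction y using TensorProduct.induction_on with
    | zero => simp
    | tmul a b =>
        induction x using TensorProduct.induction_on with
        | zero => simp
        | tmul u v =>
            simp only [map_tmul, tmul2_tmul, LinearEquiv.coe_coe]
            rw [B.ract_one, A.mul_one', B.mu_lact, A.alpha_mul]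
        | add x' y' hx hy => simp only [map_add, LinearMap.add_apply, hx, hy]
    | add x' y' hx hy => simp only [map_add, LinearMap.add_apply, hx, hy]
  exact key (A.comul h) (B.sigma m)

end RightCovBimod

end Bimod
section Main

open TensorProduct

set_option maxHeartbeats 1000000 in
set_option maxRecDepth 10000 in
theorem PR_properties' {k H : Type*} [CommRing k] [AddCommGroup H] [Module k H]
    (A : MonHomHopf k H) {M : Type*} [AddCommGroup M] [Module k M]
    (B : RightCovBimod A M) :
    (∀ m : M, B.sigma (B.PR m) = (B.μ.symm (B.PR m)) ⊗ₜ[k] A.one) ∧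
    (∀ m : M, TensorProduct.lift (B.ract.comp B.PR) (B.sigma m) = m) ∧
    (∀ m h, B.PR (B.ract m h) = A.counit h • B.μ (B.PR m)) ∧
    (∀ h m, B.PR (B.lact h m)
      = TensorProduct.lift
          ((B.lact.comp A.α.toLinearMap).compl₂ ((B.ract (B.μ.symm (B.PR m))).comp A.S))
          (A.comul h)) := by
  classical
  set lPS : M ⊗[k] H →ₗ[k] M := TensorProduct.lift (B.ract.compl₂ A.S) with hlPS
  have lPS_tmul : ∀ (u : M) (v : H), lPS (u ⊗ₜ v) = B.ract u (A.S v) := by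
    intro u v; simp [hlPS]
  have PRapp : ∀ m : M, B.PR m = lPS (B.sigma m) := fun _ => rfl
  -- ================= part (ii) =================
  have part2 : ∀ m : M, TensorProduct.lift (B.ract.comp B.PR) (B.sigma m) = m := by
    set T : (M ⊗[k] H) ⊗[k] H →ₗ[k] M :=
      TensorProduct.lift ((B.ract ∘ₗ lPS).compl₂ A.α.toLinearMap) with hT
    have step1 : ∀ x : M ⊗[k] H, TensorProduct.lift (B.ract.comp B.PR) x
        = T ((map B.sigma A.α.symm.toLinearMap) x) := by
      intro x
      induction x using TensorProduct.induction_on with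
      | zero => simp
      | tmul u v =>
          simp only [map_tmul, lift.tmul, LinearMap.comp_apply, LinearMap.compl₂_apply,
            LinearEquiv.coe_coe, hT, PRapp, A.α.apply_symm_apply]
      | add x y hx hy => simp only [map_add, hx, hy]
    have step3 : ∀ x : M ⊗[k] H,
        T ((TensorProduct.assoc k M H H).symm ((map B.μ.symm.toLinearMap A.comul) x))
          = B.μ ((TensorProduct.rid k M) ((map LinearMap.id A.counit) x)) := by
      intro x
      induction x using TensorProduct.induction_on with
      | zero => simp
      | tmul u v =>
          have inner : ∀ y : H ⊗[k] H,
              T ((TensorProduct.assoc k M H H).symm ((B.μ.symm u) ⊗ₜ y))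
                = B.ract u (TensorProduct.lift A.mul ((map A.S LinearMap.id) y)) := by
            intro y
            induction y using TensorProduct.induction_on with
            | zero => simp
            | tmul a b =>
                simp only [assoc_symm_tmul, map_tmul, lift.tmul, LinearMap.comp_apply,
                  LinearMap.compl₂_apply, LinearMap.id_coe, id_eq, LinearEquiv.coe_coe,
                  hT, lPS_tmul]
                rw [← B.ract_assoc, B.μ.apply_symm_apply]
            | add x y hx hy => simp only [map_add, tmul_add, hx, hy]
          simp only [map_tmul, LinearEquiv.coe_coe]
          rw [inner (A.comul v), A.antipode_left, map_smul, B.ract_one]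
          simp only [map_tmul, LinearMap.id_coe, id_eq, rid_tmul, map_smul]
      | add x y hx hy => simp only [map_add, hx, hy]
    intro m
    rw [step1, B.sigma_coassoc, step3, B.sigma_counit, B.μ.apply_symm_apply]
  -- ================= part (iii) =================
  have part3 : ∀ m h, B.PR (B.ract m h) = A.counit h • B.μ (B.PR m) := by
    have key : ∀ (x : M ⊗[k] H) (hh : H),
        lPS (tmul2 B.ract A.mul x (A.comul hh)) = A.counit hh • B.μ (lPS x) := by
      have inner : ∀ (u : M) (v : H) (y : H ⊗[k] H),
          lPS (tmul2 B.ract A.mul (u ⊗ₜ v) y)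
            = B.ract (B.ract u (A.α.symm
                (TensorProduct.lift A.mul ((map LinearMap.id A.S) y)))) (A.α (A.S v)) := by
        intro u v y
        induction y using TensorProduct.induction_on with
        | zero => simp
        | tmul a b =>
            simp only [tmul2_tmul, lPS_tmul, map_tmul, lift.tmul, LinearMap.id_coe, id_eq]
            rw [A.S_antimul]
            conv_lhs => rw [show B.ract u a = B.μ (B.ract (B.μ.symm u) (A.α.symm a)) from by
              rw [← B.mu_symm_ract, B.μ.apply_symm_apply]]
            rw [B.ract_assoc]
            congr 1
            conv_lhs => rw [show A.S b = A.α (A.α.symm (A.S b)) from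
              (A.α.apply_symm_apply _).symm]
            rw [← B.ract_assoc, B.μ.apply_symm_apply, ← A.alpha_symm_mul]
        | add x y hx hy => simp only [map_add, LinearMap.add_apply, hx, hy]
      intro x hh
      induction x using TensorProduct.induction_on with
      | zero => simp
      | tmul u v =>
          rw [inner, A.antipode_right, map_smul, A.alpha_symm_one, map_smul,
            LinearMap.map_smul, LinearMap.smul_apply, B.ract_one, ← B.mu_ract, lPS_tmul]
      | add x y hx hy =>
          simp only [map_add, LinearMap.add_apply, hx, hy, smul_add]
    intro m h
    rw [PRapp, B.sigma_ract, key, PRapp]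
  -- ================= part (iv) =================
  have part4 : ∀ h m, B.PR (B.lact h m)
      = TensorProduct.lift
          ((B.lact.comp A.α.toLinearMap).compl₂ ((B.ract (B.μ.symm (B.PR m))).comp A.S))
          (A.comul h) := by
    have inner : ∀ (a b : H) (x : M ⊗[k] H),
        lPS (tmul2 B.lact A.mul (a ⊗ₜ b) x)
          = B.lact (A.α a) (B.ract (B.μ.symm (lPS x)) (A.S b)) := by
      intro a b x
      induction x using TensorProduct.induction_on with
      | zero => simp
      | tmul u v =>
          simp only [tmul2_tmul, lPS_tmul]
          rw [A.S_antimul, B.mu_symm_ract]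
          conv_lhs => rw [show A.mul (A.S v) (A.S b)
              = A.α (A.α.symm (A.mul (A.S v) (A.S b))) from
            (A.α.apply_symm_apply _).symm]
          rw [B.bimod, A.alpha_symm_mul]
          congr 1
          conv_lhs => rw [show u = B.μ (B.μ.symm u) from (B.μ.apply_symm_apply u).symm]
          rw [B.ract_assoc, A.α.apply_symm_apply]
      | add x' y' hx hy => simp only [map_add, LinearMap.add_apply, hx, hy]
    have key : ∀ (y : H ⊗[k] H) (x : M ⊗[k] H),
        lPS (tmul2 B.lact A.mul y x)
          = TensorProduct.lift
              ((B.lact.comp A.α.toLinearMap).compl₂ ((B.ract (B.μ.symm (lPS x))).comp A.S))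
              y := by
      intro y x
      induction y using TensorProduct.induction_on with
      | zero => simp
      | tmul a b =>
          simp only [lift.tmul, LinearMap.comp_apply, LinearMap.compl₂_apply,
            LinearEquiv.coe_coe]
          exact inner a b x
      | add x' y' hx hy => simp only [map_add, LinearMap.add_apply, hx, hy]
    intro h m
    rw [PRapp, B.sigma_lact, key, PRapp]
  -- ================= part (i) =================
  have part1 : ∀ m : M, B.sigma (B.PR m) = (B.μ.symm (B.PR m)) ⊗ₜ[k] A.one := by
    set G : (M ⊗[k] H) →ₗ[k] H →ₗ[k] (M ⊗[k] H) :=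
      (tmul2 B.ract A.mul).compl₂ (A.comul ∘ₗ A.S ∘ₗ A.α.toLinearMap) with hG
    have step1 : ∀ x : M ⊗[k] H, B.sigma (lPS x)
        = TensorProduct.lift G ((map B.sigma A.α.symm.toLinearMap) x) := by
      intro x
      induction x using TensorProduct.induction_on with
      | zero => simp
      | tmul u v =>
          simp only [map_tmul, lift.tmul, hG, LinearMap.compl₂_apply, LinearMap.comp_apply,
            LinearEquiv.coe_coe, lPS_tmul, A.α.apply_symm_apply]
          rw [B.sigma_ract]
      | add x y hx hy => simp only [map_add, hx, hy]
    have step3 : ∀ x : M ⊗[k] H,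
        TensorProduct.lift G ((TensorProduct.assoc k M H H).symm
            ((map B.μ.symm.toLinearMap A.comul) x))
          = (B.μ.symm (lPS x)) ⊗ₜ A.one := by
      intro x
      induction x using TensorProduct.induction_on with
      | zero => simp
      | tmul u v =>
          set r1 : H →ₗ[k] M := (B.ract (B.μ.symm u)) ∘ₗ A.α.toLinearMap ∘ₗ A.S with hr1
          set r2 : H ⊗[k] H →ₗ[k] H :=
            TensorProduct.lift (A.mul.compl₂ (A.α.toLinearMap ∘ₗ A.S)) with hr2
          set Ω : H ⊗[k] (H ⊗[k] H) →ₗ[k] M ⊗[k] H :=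
            (map r1 r2) ∘ₗ (TensorProduct.comm k (H ⊗[k] H) H).toLinearMap ∘ₗ
              (TensorProduct.assoc k H H H).symm.toLinearMap with hΩ
          have Ωtmul : ∀ (a b1 b2 : H), Ω (a ⊗ₜ (b1 ⊗ₜ b2))
              = (B.ract (B.μ.symm u) (A.α (A.S b2))) ⊗ₜ (A.mul a (A.α (A.S b1))) := by
            intro a b1 b2
            simp [hΩ, hr1, hr2]
          have pc1 : ∀ q : H ⊗[k] H,
              TensorProduct.lift G ((TensorProduct.assoc k M H H).symm ((B.μ.symm u) ⊗ₜ q))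
                = Ω ((map LinearMap.id A.comul) q) := by
            intro q
            induction q using TensorProduct.induction_on with
            | zero => simp
            | tmul a b =>
                simp only [assoc_symm_tmul, lift.tmul, hG, LinearMap.compl₂_apply,
                  LinearMap.comp_apply, LinearEquiv.coe_coe, map_tmul,
                  LinearMap.id_coe, id_eq]
                rw [A.S_anticomul (A.α b), A.comul_alpha]
                have pc0 : ∀ z : H ⊗[k] H,
                    tmul2 B.ract A.mul ((B.μ.symm u) ⊗ₜ a)
                        ((TensorProduct.comm k H H)
                          ((map A.S A.S) ((map A.α.toLinearMap A.α.toLinearMap) z)))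
                      = Ω (a ⊗ₜ z) := by
                  intro z
                  induction z using TensorProduct.induction_on with
                  | zero => simp
                  | tmul b1 b2 =>
                      simp only [map_tmul, comm_tmul, tmul2_tmul, LinearEquiv.coe_coe,
                        Ωtmul, A.S_alpha]
                  | add x' y' hx hy => simp only [map_add, tmul_add, hx, hy]
                exact pc0 (A.comul b)
            | add x' y' hx hy => simp only [map_add, tmul_add, hx, hy]
          have pc2 : (map LinearMap.id A.comul) (A.comul v)
              = (map A.α.toLinearMap LinearMap.id)
                  ((TensorProduct.assoc k H H H)
                    ((map A.comul A.α.symm.toLinearMap) (A.comul v))) := by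
            rw [A.hom_coassoc]
            have l : ∀ z : H ⊗[k] H,
                (map A.α.toLinearMap LinearMap.id) ((map A.α.symm.toLinearMap A.comul) z)
                  = (map LinearMap.id A.comul) z := by
              intro z
              induction z using TensorProduct.induction_on with
              | zero => simp
              | tmul a b => simp [A.α.apply_symm_apply]
              | add x' y' hx hy => simp only [map_add, hx, hy]
            rw [l]
          have pc3 : ∀ z : H ⊗[k] H,
              Ω ((map A.α.toLinearMap LinearMap.id)
                  ((TensorProduct.assoc k H H H) ((map A.comul A.α.symm.toLinearMap) z)))
                = (B.ract (B.μ.symm u)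
                    (A.S ((TensorProduct.lid k H) ((map A.counit LinearMap.id) z)))) ⊗ₜ A.one := by
            intro z
            induction z using TensorProduct.induction_on with
            | zero => simp
            | tmul v1 v2 =>
                have pc3i : ∀ (r : H ⊗[k] H) (c : H),
                    Ω ((map A.α.toLinearMap LinearMap.id)
                        ((TensorProduct.assoc k H H H) (r ⊗ₜ c)))
                      = (B.ract (B.μ.symm u) (A.α (A.S c))) ⊗ₜ
                          (A.α (TensorProduct.lift A.mul ((map LinearMap.id A.S) r))) := by
                  intro r c
                  induction r using TensorProduct.induction_on with
                  | zero => simp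
                  | tmul x' y' =>
                      simp only [assoc_tmul, map_tmul, lift.tmul, LinearMap.id_coe, id_eq,
                        LinearEquiv.coe_coe, Ωtmul]
                      rw [A.alpha_mul]
                  | add x' y' hx hy =>
                      simp only [map_add, add_tmul, tmul_add, hx, hy, LinearMap.map_add]
                simp only [map_tmul, LinearEquiv.coe_coe, LinearMap.id_coe, id_eq]
                rw [pc3i, A.antipode_right, A.S_alpha_symm, A.α.apply_symm_apply]
                simp only [map_smul, A.alpha_one, lid_tmul, LinearMap.map_smul,
                  tmul_smul, smul_tmul']
            | add x' y' hx hy =>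
                simp only [map_add, tmul_add, add_tmul, hx, hy, LinearMap.map_add]
          simp only [map_tmul, LinearEquiv.coe_coe]
          rw [pc1, pc2, pc3, A.counit_comul_left, lPS_tmul, B.mu_symm_ract,
            A.S_alpha_symm]
      | add x y hx hy => simp only [map_add, add_tmul, hx, hy, LinearMap.map_add]
    intro m
    rw [PRapp, step1, B.sigma_coassoc, step3]
  exact ⟨part1, part2, part3, part4⟩

end Main

/-- properties of the projection `P_R(m) = m_[0] · S(m_[1])` on a
right-covariant Hom-bimodule. -/
theorem PR_properties {k H : Type*} [CommRing k] [AddCommGroup H] [Module k H]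
    (A : MonHomHopf k H) {M : Type*} [AddCommGroup M] [Module k M]
    (B : RightCovBimod A M) :
    (∀ m : M, B.sigma (B.PR m) = (B.μ.symm (B.PR m)) ⊗ₜ[k] A.one) ∧
    (∀ m : M, TensorProduct.lift (B.ract.comp B.PR) (B.sigma m) = m) ∧
    (∀ m h, B.PR (B.ract m h) = A.counit h • B.μ (B.PR m)) ∧
    (∀ h m, B.PR (B.lact h m)
      = TensorProduct.lift
          ((B.lact.comp A.α.toLinearMap).compl₂ ((B.ract (B.μ.symm (B.PR m))).comp A.S))
          (A.comul h)) := by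
  exact PR_properties' A B
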